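/- Let 1 ≤ k ≤ n and let ℐ = [n] \ [k]. For each T ⊆ ℐ define α^T ∈ ℝ^(2^[n]) (coordinates indexed by subsets A ⊆ [n]) by α^T_A = (−1)^(#A) if A ∩ ℐ = T and α^T_A = 0 otherwise. Then the vectors {α^T : T ⊆ ℐ} form a basis of the kernel of the linear map ℝ^(2^[n]) → ℝ × ℝ^(𝕋̄_n^k) sending t to (Σ_{A ⊆ [n]} t_A, (Σ_{A ⊆ [n]} d^A_F t_A)_{F ∈ 𝕋̄_n^k}). -/

import Mathlib

open Finset

/-- The nonempty faces of the turtle complex `𝕋_n^k`: nonempty subsets of `[n]` omitting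
at least one element of `[k]`. -/
abbrev TFace (n k : ℕ) : Type :=
  {F : Finset (Fin n) // F.Nonempty ∧ ∃ i : Fin n, i.val < k ∧ i ∉ F}

/-- The vector `α^T ∈ ℝ^(2^[n])`: `α^T_A = (−1)^#A` if `A ∩ ℐ = T` and `0` otherwise,
where `ℐ = [n] \ [k]`. -/
noncomputable def alphaVec (n k : ℕ) (T : Finset (Fin n)) : Finset (Fin n) → ℝ :=
  fun A => if A.filter (fun i => k ≤ i.val) = T then (-1 : ℝ) ^ A.card else 0

/-- The linear map `ℝ^(2^[n]) → ℝ × ℝ^(𝕋̄_n^k)`,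
`t ↦ (Σ_A t_A, (Σ_A d^A_F t_A)_F)`. -/
noncomputable def turtleMap (n k : ℕ) :
    (Finset (Fin n) → ℝ) →ₗ[ℝ] ℝ × (TFace n k → ℝ) where
  toFun t := (∑ A : Finset (Fin n), t A,
    fun F => ∑ A : Finset (Fin n),
      (if Odd ((F.val ∩ A).card) then (1 : ℝ) else 0) * t A)
  map_add' t s := by
    refine Prod.ext ?_ ?_
    · simp [Finset.sum_add_distrib]
    · funext F
      simp [mul_add, Finset.sum_add_distrib]
  map_smul' c t := by
    refine Prod.ext ?_ ?_
    · simp [Finset.mul_sum]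
    · funext F
      simp [Finset.mul_sum, mul_left_comm]

open scoped symmDiff

section Aux

variable {n k : ℕ}

lemma symmDiff_card_parity (X Y : Finset (Fin n)) :
    ((-1:ℝ) ^ X.card) * ((-1:ℝ) ^ Y.card) = (-1:ℝ) ^ (X ∆ Y).card := by
  have hd : Disjoint (X \ Y) (Y \ X) := disjoint_sdiff_sdiff
  have h1 : (X ∆ Y).card = (X \ Y).card + (Y \ X).card := by
    rw [symmDiff_def]
    exact Finset.card_union_of_disjoint hd
  have h2 : (X \ Y).card + (X ∩ Y).card = X.card := Finset.card_sdiff_add_card_inter X Y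
  have h3 : (Y \ X).card + (Y ∩ X).card = Y.card := Finset.card_sdiff_add_card_inter Y X
  have h4 : (Y ∩ X).card = (X ∩ Y).card := by rw [Finset.inter_comm]
  have h5 : X.card + Y.card = (X ∆ Y).card + 2 * (X ∩ Y).card := by omega
  rw [← pow_add, h5, pow_add, pow_mul]
  norm_num

lemma char_sum (C s : Finset (Fin n)) :
    ∑ S ∈ s.powerset, (-1:ℝ) ^ (C ∩ S).card =
      if C ∩ s = ∅ then (2:ℝ) ^ s.card else 0 := by
  induction s using Finset.induction_on with
  | empty => simp
  | @insert a s' ha ih =>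
    rw [Finset.sum_powerset_insert ha]
    by_cases hC : a ∈ C
    · have key : ∀ t ∈ s'.powerset, (-1:ℝ)^(C ∩ insert a t).card = -((-1:ℝ)^(C ∩ t).card) := by
        intro t htm
        have hat : a ∉ t := fun h => ha (Finset.mem_powerset.mp htm h)
        have h1 : C ∩ insert a t = insert a (C ∩ t) := by
          ext x
          simp only [Finset.mem_inter, Finset.mem_insert]
          constructor
          · rintro ⟨hxC, rfl | hx⟩
            · exact Or.inl rfl
            · exact Or.inr ⟨hxC, hx⟩
          · rintro (rfl | ⟨hh1, hh2⟩)
            · exact ⟨hC, Or.inl rfl⟩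
            · exact ⟨hh1, Or.inr hh2⟩
        have h2 : a ∉ C ∩ t := by simp [hat]
        rw [h1, Finset.card_insert_of_notMem h2, pow_succ]
        ring
      rw [Finset.sum_congr rfl key]
      have hne : C ∩ insert a s' ≠ ∅ :=
        Finset.ne_empty_of_mem (Finset.mem_inter.mpr ⟨hC, Finset.mem_insert_self a s'⟩)
      rw [if_neg hne]
      simp
    · have key : ∀ t ∈ s'.powerset, (-1:ℝ)^(C ∩ insert a t).card = (-1:ℝ)^(C ∩ t).card := by
        intro t _
        have h1 : C ∩ insert a t = C ∩ t := by
          ext x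
          simp only [Finset.mem_inter, Finset.mem_insert]
          constructor
          · rintro ⟨hxC, rfl | hx⟩
            · exact absurd hxC hC
            · exact ⟨hxC, hx⟩
          · rintro ⟨hh1, hh2⟩
            exact ⟨hh1, Or.inr hh2⟩
        rw [h1]
      rw [Finset.sum_congr rfl key, ih]
      have h3 : C ∩ insert a s' = C ∩ s' := by
        ext x
        simp only [Finset.mem_inter, Finset.mem_insert]
        constructor
        · rintro ⟨hxC, rfl | hx⟩
          · exact absurd hxC hC
          · exact ⟨hxC, hx⟩
        · rintro ⟨hh1, hh2⟩
          exact ⟨hh1, Or.inr hh2⟩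
      rw [h3, Finset.card_insert_of_notMem ha]
      by_cases h : C ∩ s' = ∅ <;> simp [h, pow_succ] <;> ring

lemma symmDiff_singleton_card_pow (A : Finset (Fin n)) (i : Fin n) :
    (-1:ℝ) ^ ((A ∆ {i}).card) = -((-1:ℝ) ^ A.card) := by
  have h := symmDiff_card_parity A ({i} : Finset (Fin n))
  rw [Finset.card_singleton, pow_one] at h
  rw [← h]
  ring

lemma filter_symmDiff_singleton (A : Finset (Fin n)) (i : Fin n) (p : Fin n → Prop)
    [DecidablePred p] (hp : ¬ p i) :
    (A ∆ {i}).filter p = A.filter p := by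
  ext x
  simp only [Finset.mem_filter, Finset.mem_symmDiff, Finset.mem_singleton]
  constructor
  · rintro ⟨⟨hA, _⟩ | ⟨rfl, _⟩, hx⟩
    · exact ⟨hA, hx⟩
    · exact absurd hx hp
  · rintro ⟨hA, hx⟩
    refine ⟨Or.inl ⟨hA, ?_⟩, hx⟩
    rintro rfl
    exact hp hx

lemma symmDiff_singleton_involutive (i : Fin n) :
    Function.Involutive (fun A : Finset (Fin n) => A ∆ {i}) :=
  fun A => symmDiff_symmDiff_cancel_right {i} A

lemma sum_flip_zero (g : Finset (Fin n) → ℝ) (i : Fin n)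
    (hg : ∀ A, g (A ∆ {i}) = - g A) : ∑ A : Finset (Fin n), g A = 0 := by
  have h := Equiv.sum_comp ((symmDiff_singleton_involutive i).toPerm _) g
  rw [Finset.sum_congr rfl (fun A _ => by
    show g ((symmDiff_singleton_involutive i).toPerm _ A) = - g A
    rw [Function.Involutive.coe_toPerm]
    exact hg A)] at h
  rw [Finset.sum_neg_distrib] at h
  linarith

lemma alphaVec_flip (T : Finset (Fin n)) (i : Fin n) (hi : i.val < k) (A : Finset (Fin n)) :
    alphaVec n k T (A ∆ {i}) = - alphaVec n k T A := by
  unfold alphaVec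
  rw [filter_symmDiff_singleton A i _ (Nat.not_le.mpr hi)]
  by_cases h : A.filter (fun j => k ≤ j.val) = T
  · rw [if_pos h, if_pos h, symmDiff_singleton_card_pow]
  · rw [if_neg h, if_neg h, neg_zero]

lemma alphaVec_mem_ker (hk : 1 ≤ k) (hkn : k ≤ n) (T : Finset (Fin n)) :
    turtleMap n k (alphaVec n k T) = 0 := by
  have hn : 0 < n := lt_of_lt_of_le hk hkn
  refine Prod.ext ?_ ?_
  · show (∑ A : Finset (Fin n), alphaVec n k T A) = 0
    exact sum_flip_zero _ ⟨0, hn⟩ (fun A => alphaVec_flip T ⟨0, hn⟩ hk A)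
  · funext F
    show (∑ A : Finset (Fin n),
      (if Odd ((F.val ∩ A).card) then (1:ℝ) else 0) * alphaVec n k T A) = 0
    obtain ⟨hne, i, hik, hiF⟩ := F.property
    apply sum_flip_zero _ i
    intro A
    rw [alphaVec_flip T i hik]
    have hFA : F.val ∩ (A ∆ {i}) = F.val ∩ A := by
      ext x
      simp only [Finset.mem_inter, Finset.mem_symmDiff, Finset.mem_singleton]
      constructor
      · rintro ⟨hF, ⟨hA, _⟩ | ⟨rfl, _⟩⟩
        · exact ⟨hF, hA⟩
        · exact absurd hF hiF
      · rintro ⟨hF, hA⟩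
        refine ⟨hF, Or.inl ⟨hA, ?_⟩⟩
        rintro rfl
        exact hiF hF
    rw [hFA]
    ring

lemma neg_one_pow_eq_ite' (m : ℕ) :
    (-1:ℝ)^m = 1 - 2 * (if Odd m then (1:ℝ) else 0) := by
  by_cases h : Odd m
  · rw [if_pos h, Odd.neg_one_pow h]; ring
  · rw [if_neg h, (Nat.not_odd_iff_even.mp h).neg_one_pow]; ring

lemma hat_zero (t : Finset (Fin n) → ℝ) (ht : turtleMap n k t = 0)
    (S : Finset (Fin n)) (i : Fin n) (hik : i.val < k) (hiS : i ∉ S) :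
    ∑ B : Finset (Fin n), (-1:ℝ) ^ (S ∩ B).card * t B = 0 := by
  have h1 : ∑ B : Finset (Fin n), t B = 0 := congrArg Prod.fst ht
  rcases S.eq_empty_or_nonempty with rfl | hS
  · simpa using h1
  · have h2 : ∑ B : Finset (Fin n), (if Odd ((S ∩ B).card) then (1:ℝ) else 0) * t B = 0 :=
      congrFun (congrArg Prod.snd ht) ⟨S, hS, i, hik, hiS⟩
    calc ∑ B : Finset (Fin n), (-1:ℝ)^(S ∩ B).card * t B
        = ∑ B : Finset (Fin n),
            (t B - 2 * ((if Odd ((S ∩ B).card) then (1:ℝ) else 0) * t B)) := by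
          refine Finset.sum_congr rfl (fun B _ => ?_)
          rw [neg_one_pow_eq_ite']
          ring
      _ = 0 := by
          rw [Finset.sum_sub_distrib, h1, ← Finset.mul_sum, h2]
          ring

lemma ker_flip (t : Finset (Fin n) → ℝ) (ht : turtleMap n k t = 0)
    (i : Fin n) (hik : i.val < k) (A : Finset (Fin n)) :
    t (A ∆ {i}) = - t A := by
  set c : ℝ := (2:ℝ) ^ (Finset.univ.erase i : Finset (Fin n)).card with hc
  have c2 : (0:ℝ) < c := by positivity
  have main : ∑ S ∈ ((Finset.univ : Finset (Fin n)).erase i).powerset,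
      (-1:ℝ)^(A ∩ S).card * ∑ B : Finset (Fin n), (-1:ℝ)^(S ∩ B).card * t B = 0 := by
    refine Finset.sum_eq_zero (fun S hS => ?_)
    have hiS : i ∉ S := fun h => (Finset.mem_erase.mp (Finset.mem_powerset.mp hS h)).1 rfl
    rw [hat_zero t ht S i hik hiS, mul_zero]
  have swap : ∑ S ∈ ((Finset.univ : Finset (Fin n)).erase i).powerset,
      (-1:ℝ)^(A ∩ S).card * ∑ B : Finset (Fin n), (-1:ℝ)^(S ∩ B).card * t B
      = ∑ B : Finset (Fin n),
          (if (A ∆ B) ∩ (Finset.univ.erase i) = ∅ then c else 0) * t B := by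
    calc ∑ S ∈ ((Finset.univ : Finset (Fin n)).erase i).powerset,
          (-1:ℝ)^(A ∩ S).card * ∑ B : Finset (Fin n), (-1:ℝ)^(S ∩ B).card * t B
        = ∑ S ∈ ((Finset.univ : Finset (Fin n)).erase i).powerset,
            ∑ B : Finset (Fin n), ((-1:ℝ)^((A ∆ B) ∩ S).card) * t B := by
          refine Finset.sum_congr rfl (fun S _ => ?_)
          rw [Finset.mul_sum]
          refine Finset.sum_congr rfl (fun B _ => ?_)
          rw [← mul_assoc, Finset.inter_comm S B, symmDiff_card_parity,
            show (A ∩ S) ∆ (B ∩ S) = A ∆ B ∩ S from (inf_symmDiff_distrib_right A B S).symm]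
      _ = ∑ B : Finset (Fin n),
            ∑ S ∈ ((Finset.univ : Finset (Fin n)).erase i).powerset,
              ((-1:ℝ)^((A ∆ B) ∩ S).card) * t B := Finset.sum_comm
      _ = _ := by
          refine Finset.sum_congr rfl (fun B _ => ?_)
          rw [← Finset.sum_mul, char_sum]
  have hne : A ≠ A ∆ {i} := fun h => Finset.singleton_ne_empty i (symmDiff_eq_left.mp h.symm)
  have hsplit : ∀ B : Finset (Fin n),
      (if (A ∆ B) ∩ (Finset.univ.erase i) = ∅ then c else 0)
      = (if B = A then c else 0) + (if B = A ∆ {i} then c else 0) := by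
    intro B
    have hcond : (A ∆ B) ∩ (Finset.univ.erase i) = ∅ ↔ (B = A ∨ B = A ∆ {i}) := by
      constructor
      · intro h
        have hsub : A ∆ B ⊆ {i} := by
          intro x hx
          by_contra hxi
          have hx2 : x ∈ (A ∆ B) ∩ (Finset.univ.erase i) :=
            Finset.mem_inter.mpr ⟨hx, Finset.mem_erase.mpr ⟨by simpa using hxi, Finset.mem_univ x⟩⟩
          rw [h] at hx2
          exact absurd hx2 (Finset.notMem_empty x)
        rcases Finset.subset_singleton_iff.mp hsub with h0 | h0
        · left
          exact (symmDiff_eq_bot.mp h0).symm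
        · right
          have h1 := congrArg (fun X => A ∆ X) h0
          simpa [symmDiff_symmDiff_cancel_left] using h1
      · rintro (rfl | rfl)
        · rw [symmDiff_self]
          exact Finset.empty_inter _
        · rw [symmDiff_symmDiff_cancel_left]
          ext x
          simp only [Finset.mem_inter, Finset.mem_singleton, Finset.mem_erase,
            Finset.notMem_empty, iff_false]
          rintro ⟨rfl, hx, _⟩
          exact hx rfl
    by_cases h : (A ∆ B) ∩ (Finset.univ.erase i) = ∅
    · rcases hcond.mp h with rfl | rfl
      · rw [if_pos h, if_pos rfl, if_neg (fun hB => hne hB), add_zero]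
      · rw [if_pos h, if_pos rfl, if_neg (fun hB => hne hB.symm), zero_add]
    · rw [if_neg h, if_neg (fun hB => h (hcond.mpr (Or.inl hB))),
        if_neg (fun hB => h (hcond.mpr (Or.inr hB))), add_zero]
  rw [swap] at main
  rw [Finset.sum_congr rfl (fun B _ => by rw [hsplit B])] at main
  simp only [add_mul, Finset.sum_add_distrib, ite_mul, zero_mul] at main
  rw [Finset.sum_ite_eq' Finset.univ A (fun B => c * t B),
    Finset.sum_ite_eq' Finset.univ (A ∆ {i}) (fun B => c * t B)] at main
  simp only [Finset.mem_univ, if_pos] at main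
  have hfin : t A + t (A ∆ {i}) = 0 := by
    have h3 : c * (t A + t (A ∆ {i})) = 0 := by linarith
    rcases mul_eq_zero.mp h3 with h4 | h4
    · exact absurd h4 (ne_of_gt c2)
    · exact h4
  linarith

lemma ker_value (t : Finset (Fin n) → ℝ) (ht : turtleMap n k t = 0)
    (A : Finset (Fin n)) :
    t A = (-1:ℝ)^((A.filter (fun j => ¬ k ≤ j.val)).card)
      * t (A.filter (fun j => k ≤ j.val)) := by
  induction A using Finset.strongInductionOn with
  | _ A ih =>
    by_cases h : (A.filter (fun j => ¬ k ≤ j.val)) = ∅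
    · have hall : ∀ j ∈ A, k ≤ j.val := by
        intro j hj
        by_contra hcon
        exact (Finset.filter_eq_empty_iff.mp h hj) hcon
      rw [h, Finset.card_empty, pow_zero, one_mul, Finset.filter_true_of_mem hall]
    · obtain ⟨i, hi⟩ := Finset.nonempty_iff_ne_empty.mpr h
      have hiA : i ∈ A := (Finset.mem_filter.mp hi).1
      have hik : i.val < k := Nat.not_le.mp (Finset.mem_filter.mp hi).2
      have hflip : t A = - t (A.erase i) := by
        have h1 := ker_flip t ht i hik (A.erase i)
        have h2 : (A.erase i) ∆ {i} = A := by
          ext x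
          by_cases hxi : x = i <;>
            simp [Finset.mem_symmDiff, Finset.mem_erase, hxi, hiA]
        rw [h2] at h1
        linarith
      rw [hflip, ih (A.erase i) (Finset.erase_ssubset hiA)]
      have e1 : (A.erase i).filter (fun j => k ≤ j.val) = A.filter (fun j => k ≤ j.val) := by
        rw [Finset.filter_erase, Finset.erase_eq_of_notMem]
        simp only [Finset.mem_filter, not_and]
        intro _
        exact Nat.not_le.mpr hik
      have e2 : ((A.erase i).filter (fun j => ¬ k ≤ j.val)).card + 1
          = (A.filter (fun j => ¬ k ≤ j.val)).card := by
        rw [Finset.filter_erase]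
        exact Finset.card_erase_add_one hi
      rw [e1, ← e2, pow_succ]
      ring

end Aux

/-- the vectors `α^T`, for `T ⊆ ℐ = [n] \ [k]`, form a basis of the kernel
of the map `t ↦ (Σ_A t_A, (Σ_A d^A_F t_A)_{F ∈ 𝕋̄_n^k})`. -/
theorem stmt_9 (n k : ℕ) (hk : 1 ≤ k) (hkn : k ≤ n) :
    LinearIndependent ℝ
      (fun T : {T : Finset (Fin n) // ∀ i ∈ T, k ≤ i.val} => alphaVec n k T.val) ∧
    Submodule.span ℝ
        (Set.range (fun T : {T : Finset (Fin n) // ∀ i ∈ T, k ≤ i.val} =>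
          alphaVec n k T.val)) =
      LinearMap.ker (turtleMap n k) := by
  constructor
  · rw [Fintype.linearIndependent_iff]
    intro g hg T₀
    have h := congrFun hg T₀.val
    simp only [Finset.sum_apply, Pi.smul_apply, smul_eq_mul, Pi.zero_apply] at h
    have hfilt : T₀.val.filter (fun i => k ≤ i.val) = T₀.val :=
      Finset.filter_true_of_mem T₀.property
    have hother : ∀ T ∈ (Finset.univ : Finset {T : Finset (Fin n) // ∀ i ∈ T, k ≤ i.val}),
        T ≠ T₀ → g T * alphaVec n k T.val T₀.val = 0 := by
      intro T _ hT
      have hzero : alphaVec n k T.val T₀.val = 0 := by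
        unfold alphaVec
        rw [if_neg (fun hcon => hT (Subtype.ext ((hfilt.symm.trans hcon).symm)))]
      rw [hzero, mul_zero]
    rw [Finset.sum_eq_single T₀ hother
      (fun hmem => absurd (Finset.mem_univ T₀) hmem)] at h
    have hval : alphaVec n k T₀.val T₀.val = (-1:ℝ)^(T₀.val.card) := by
      unfold alphaVec
      rw [if_pos hfilt]
    rw [hval] at h
    rcases mul_eq_zero.mp h with h' | h'
    · exact h'
    · exact absurd h' (pow_ne_zero _ (by norm_num))
  · apply le_antisymm
    · rw [Submodule.span_le]
      rintro _ ⟨T, rfl⟩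
      exact LinearMap.mem_ker.mpr (alphaVec_mem_ker hk hkn T.val)
    · intro t htm
      have ht : turtleMap n k t = 0 := LinearMap.mem_ker.mp htm
      have key : t = ∑ T : {T : Finset (Fin n) // ∀ i ∈ T, k ≤ i.val},
          ((-1:ℝ)^(T.val.card) * t T.val) • alphaVec n k T.val := by
        funext A
        have hA := ker_value t ht A
        simp only [Finset.sum_apply, Pi.smul_apply, smul_eq_mul]
        have hmemT : ∀ i ∈ A.filter (fun j => k ≤ j.val), k ≤ i.val :=
          fun i hi => (Finset.mem_filter.mp hi).2
        have hother : ∀ T ∈ (Finset.univ : Finset {T : Finset (Fin n) // ∀ i ∈ T, k ≤ i.val}),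
            T ≠ (⟨A.filter (fun j => k ≤ j.val), hmemT⟩ :
              {T : Finset (Fin n) // ∀ i ∈ T, k ≤ i.val}) →
            ((-1:ℝ)^(T.val.card) * t T.val) * alphaVec n k T.val A = 0 := by
          intro T _ hT
          have hzero : alphaVec n k T.val A = 0 := by
            unfold alphaVec
            rw [if_neg (fun hcon => hT (Subtype.ext hcon.symm))]
          rw [hzero, mul_zero]
        rw [Finset.sum_eq_single _ hother (fun hmem => absurd (Finset.mem_univ _) hmem)]
        symm
        show ((-1:ℝ)^((A.filter (fun j => k ≤ j.val)).card) * t (A.filter (fun j => k ≤ j.val)))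
            * alphaVec n k (A.filter (fun j => k ≤ j.val)) A = t A
        have hpos : alphaVec n k (A.filter (fun j => k ≤ j.val)) A = (-1:ℝ)^A.card := by
          unfold alphaVec
          rw [if_pos rfl]
        rw [hpos, hA]
        have hcard : (A.filter (fun j => k ≤ j.val)).card
            + (A.filter (fun j => ¬ k ≤ j.val)).card = A.card :=
          Finset.card_filter_add_card_filter_not _
        rw [← hcard, pow_add]
        have h1 : ((-1:ℝ)^((A.filter (fun j => k ≤ j.val)).card))
            * ((-1:ℝ)^((A.filter (fun j => k ≤ j.val)).card)) = 1 := by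
          rw [← pow_add, ← two_mul, pow_mul]
          norm_num
        calc ((-1:ℝ)^((A.filter (fun j => k ≤ j.val)).card) * t (A.filter (fun j => k ≤ j.val)))
              * ((-1:ℝ)^((A.filter (fun j => k ≤ j.val)).card)
                * (-1:ℝ)^((A.filter (fun j => ¬ k ≤ j.val)).card))
            = (((-1:ℝ)^((A.filter (fun j => k ≤ j.val)).card))
                * ((-1:ℝ)^((A.filter (fun j => k ≤ j.val)).card)))
              * ((-1:ℝ)^((A.filter (fun j => ¬ k ≤ j.val)).card)
                * t (A.filter (fun j => k ≤ j.val))) := by ring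
          _ = (-1:ℝ)^((A.filter (fun j => ¬ k ≤ j.val)).card)
                * t (A.filter (fun j => k ≤ j.val)) := by rw [h1, one_mul]
      rw [key]
      exact Submodule.sum_mem _
        (fun T _ => Submodule.smul_mem _ _ (Submodule.subset_span ⟨T, rfl⟩))
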